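/- Let G be a P̂₄-free graph and let u₀, u₁, u₂, u₃ be four pairwise adjacent vertices of G, with S = {u₀, u₁, u₂, u₃} and Xᵢ = N(uᵢ) \ S for 0 ≤ i ≤ 3. Then the number of triangles of G that contain at least one vertex of S equals 4 + Σ_{i=0}^{3} e(G[Xᵢ]), where e(G[Xᵢ]) is the number of edges of the subgraph of G induced on Xᵢ. -/

import Mathlib

/-- `H` is contained in `G` as a (not necessarily induced) subgraph:
there is an injective map of vertices carrying edges of `H` to edges of `G`. -/
def Contains {α β : Type*} (H : SimpleGraph α) (G : SimpleGraph β) : Prop :=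
  ∃ f : α → β, Function.Injective f ∧ ∀ ⦃a b⦄, H.Adj a b → G.Adj (f a) (f b)

/-- The suspension `P̂₄` of the path on 4 vertices: a new apex vertex `none`
is joined to all four vertices of `P₄`. -/
def hatP4 : SimpleGraph (Option (Fin 4)) :=
  SimpleGraph.fromRel (fun a b =>
    (∃ i j, a = some i ∧ b = some j ∧ (SimpleGraph.pathGraph 4).Adj i j) ∨ a = none)

/-- The number of triangles (3-cliques) of a graph. -/
noncomputable def triangleCount {V : Type*} (G : SimpleGraph V) : ℕ :=
  (G.cliqueSet 3).ncard

open SimpleGraph in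
lemma contains_of_aux {V : Type*} (G : SimpleGraph V) (a x b c d : V)
    (hxb : G.Adj x b) (hbc : G.Adj b c) (hcd : G.Adj c d)
    (hax : G.Adj a x) (hab : G.Adj a b) (hac : G.Adj a c) (had : G.Adj a d)
    (hxc : x ≠ c) (hxd : x ≠ d) (hbd : b ≠ d) :
    Contains hatP4 G := by
  refine ⟨fun o => o.elim a ![x, b, c, d], ?_, ?_⟩
  · have h1 := hax.ne; have h2 := hab.ne; have h3 := hac.ne; have h4 := had.ne
    have h5 := hxb.ne; have h6 := hbc.ne; have h7 := hcd.ne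
    intro o1 o2 h
    fin_cases o1 <;> fin_cases o2 <;> simp_all <;> tauto
  · intro o1 o2 h
    have hG := G.symm
    fin_cases o1 <;> fin_cases o2 <;>
      simp_all [hatP4, SimpleGraph.fromRel_adj, SimpleGraph.pathGraph_adj] <;> tauto

open SimpleGraph in
lemma key_lemma {V : Type*} (G : SimpleGraph V) (hfree : ¬ Contains hatP4 G)
    (u : Fin 4 → V) (hadj : ∀ i j : Fin 4, i ≠ j → G.Adj (u i) (u j))
    (x : V) (hx : x ∉ Set.range u) {i j : Fin 4} (hij : i ≠ j)
    (h1 : G.Adj (u i) x) (h2 : G.Adj (u j) x) : False := by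
  obtain ⟨k, l, hk1, hk2, hl1, hl2, hkl⟩ :
      ∃ k l : Fin 4, k ≠ i ∧ k ≠ j ∧ l ≠ i ∧ l ≠ j ∧ k ≠ l := by
    have : ∀ i j : Fin 4, i ≠ j → ∃ k l : Fin 4, k ≠ i ∧ k ≠ j ∧ l ≠ i ∧ l ≠ j ∧ k ≠ l := by
      decide
    exact this i j hij
  exact hfree <| contains_of_aux G (u i) x (u j) (u k) (u l)
    h2.symm (hadj j k (Ne.symm hk2)) (hadj k l hkl)
    h1 (hadj i j hij) (hadj i k (Ne.symm hk1)) (hadj i l (Ne.symm hl1))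
    (fun h => hx ⟨k, h.symm⟩) (fun h => hx ⟨l, h.symm⟩) (hadj j l (Ne.symm hl2)).ne

open SimpleGraph in
lemma countA0 {V : Type} [Fintype V] (G : SimpleGraph V) (u : Fin 4 → V)
    (huinj : Function.Injective u) (hadj : ∀ i j : Fin 4, i ≠ j → G.Adj (u i) (u j)) :
    {T : Finset V | T ∈ G.cliqueSet 3 ∧ ∀ v ∈ T, v ∈ Set.range u}.ncard = 4 := by
  classical
  have hset : {T : Finset V | T ∈ G.cliqueSet 3 ∧ ∀ v ∈ T, v ∈ Set.range u} =
      ↑((Finset.univ.powersetCard 3 : Finset (Finset (Fin 4))).image (Finset.image u)) := by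
    ext T
    simp only [Set.mem_setOf_eq, Finset.coe_image, Set.mem_image, Finset.mem_coe,
      Finset.mem_powersetCard_univ, mem_cliqueSet_iff]
    constructor
    · rintro ⟨hT, hsub⟩
      refine ⟨T.preimage u huinj.injOn, ?_, ?_⟩
      · have himg : (T.preimage u huinj.injOn).image u = T := by
          rw [Finset.image_preimage]
          exact Finset.filter_true_of_mem fun x hx => hsub x hx
        have := Finset.card_image_of_injective (T.preimage u huinj.injOn) huinj
        rw [himg, hT.card_eq] at this
        omega
      · rw [Finset.image_preimage]
        exact Finset.filter_true_of_mem fun x hx => hsub x hx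
    · rintro ⟨s, hs, rfl⟩
      refine ⟨⟨?_, ?_⟩, ?_⟩
      · intro v hv w hw hvw
        simp only [Finset.coe_image, Set.mem_image, Finset.mem_coe] at hv hw
        obtain ⟨i, -, rfl⟩ := hv
        obtain ⟨j, -, rfl⟩ := hw
        exact hadj i j (fun h => hvw (by rw [h]))
      · rw [Finset.card_image_of_injective _ huinj, hs]
      · intro v hv
        obtain ⟨i, -, rfl⟩ := Finset.mem_image.1 hv
        exact ⟨i, rfl⟩
  rw [hset, Set.ncard_coe_finset,
    Finset.card_image_of_injective _ (Finset.image_injective huinj),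
    Finset.card_powersetCard]
  simp

open SimpleGraph in
lemma countB {V : Type} [Fintype V] (G : SimpleGraph V) (u : Fin 4 → V)
    (huinj : Function.Injective u)
    (hK : ∀ x, x ∉ Set.range u → ∀ j k : Fin 4, j ≠ k →
      G.Adj (u j) x → G.Adj (u k) x → False) (i : Fin 4) :
    {T : Finset V | T ∈ G.cliqueSet 3 ∧ u i ∈ T ∧ ∃ v ∈ T, v ∉ Set.range u}.ncard
      = ((G.induce (G.neighborSet (u i) \ Set.range u)).edgeSet).ncard := by
  classical
  set X : Set V := G.neighborSet (u i) \ Set.range u with hX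
  set ψ : Sym2 ↥X → Finset V :=
    Sym2.lift ⟨fun x y => {u i, x.1, y.1}, fun x y => by
      simp [Finset.pair_comm x.1 y.1]⟩ with hψ
  have hne : ∀ a : ↥X, (a : V) ≠ u i := fun a h =>
    G.irrefl (h ▸ a.2.1)
  -- image equality
  have himg : ψ '' (G.induce X).edgeSet
      = {T : Finset V | T ∈ G.cliqueSet 3 ∧ u i ∈ T ∧ ∃ v ∈ T, v ∉ Set.range u} := by
    ext T
    constructor
    · rintro ⟨e, he, rfl⟩
      induction e with
      | h a b =>
        rw [SimpleGraph.mem_edgeSet] at he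
        have hab : G.Adj a.1 b.1 := he
        have ha : G.Adj (u i) a.1 := a.2.1
        have hb : G.Adj (u i) b.1 := b.2.1
        refine ⟨?_, ?_, ⟨a.1, ?_, a.2.2⟩⟩
        · rw [mem_cliqueSet_iff]
          exact SimpleGraph.is3Clique_triple_iff.2 ⟨ha, hb, hab⟩
        · simp [ψ]
        · simp [ψ]
    · rintro ⟨hT, hui, v, hv, hvr⟩
      rw [mem_cliqueSet_iff, SimpleGraph.is3Clique_iff] at hT
      obtain ⟨a, b, c, hab, hac, hbc, rfl⟩ := hT
      have main : ∀ x y : V, ({a, b, c} : Finset V) = {u i, x, y} →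
          G.Adj (u i) x → G.Adj (u i) y → G.Adj x y →
          ({a,b,c} : Finset V) ∈ ψ '' (G.induce X).edgeSet := by
        intro x y hTe hx hy hxy
        have hout2 : ∀ p q : V, p ∉ Set.range u → G.Adj (u i) p → G.Adj (u i) q →
            G.Adj p q → q ∉ Set.range u := by
          rintro p q hp hpi hqi hpq ⟨j, rfl⟩
          have hji : j ≠ i := fun h => G.irrefl (h ▸ hqi)
          exact hK p hp j i hji hpq.symm hpi
        have houts : x ∉ Set.range u ∧ y ∉ Set.range u := by
          have hvmem := hv
          rw [hTe] at hvmem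
          simp only [Finset.mem_insert, Finset.mem_singleton] at hvmem
          rcases hvmem with rfl | rfl | rfl
          · exact absurd ⟨i, rfl⟩ hvr
          · exact ⟨hvr, hout2 _ _ hvr hx hy hxy⟩
          · exact ⟨hout2 _ _ hvr hy hx hxy.symm, hvr⟩
        refine ⟨s((⟨x, hx, houts.1⟩ : ↥X), (⟨y, hy, houts.2⟩ : ↥X)), ?_, ?_⟩
        · rw [SimpleGraph.mem_edgeSet]
          exact hxy
        · simp [ψ, hTe]
      have hui' := hui
      simp only [Finset.mem_insert, Finset.mem_singleton] at hui'
      rcases hui' with rfl | rfl | rfl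
      · exact main b c rfl hab hac hbc
      · exact main a c (by ext z; simp; tauto) hab.symm hbc hac
      · exact main a b (by ext z; simp; tauto) hac.symm hbc.symm hab
  -- injectivity
  have hinj : Set.InjOn ψ (G.induce X).edgeSet := by
    intro e1 he1 e2 he2 heq
    induction e1 with
    | h a b =>
      induction e2 with
      | h c d =>
        rw [SimpleGraph.mem_edgeSet] at he1 he2
        have hab : a ≠ b := he1.ne
        have hcd : c ≠ d := he2.ne
        simp only [ψ, Sym2.lift_mk] at heq
        have hpair : ({(a : V), (b : V)} : Finset V) = {(c : V), (d : V)} := by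
          have h1 : (({u i, (a:V), (b:V)} : Finset V).erase (u i)) =
              (({u i, (c:V), (d:V)} : Finset V).erase (u i)) := by rw [heq]
          rwa [Finset.erase_insert (by simp [Ne.symm (hne a), Ne.symm (hne b)]),
            Finset.erase_insert (by simp [Ne.symm (hne c), Ne.symm (hne d)])] at h1
        have hpair' : ((a : V) = c ∧ (b : V) = d) ∨ ((a : V) = d ∧ (b : V) = c) := by
          have := Finset.coe_inj.2 hpair
          simp only [Finset.coe_insert, Finset.coe_singleton] at this
          exact Set.pair_eq_pair_iff.1 this
        rcases hpair' with ⟨h1, h2⟩ | ⟨h1, h2⟩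
        · rw [Sym2.eq_iff]; left; exact ⟨Subtype.ext h1, Subtype.ext h2⟩
        · rw [Sym2.eq_iff]; right; exact ⟨Subtype.ext h1, Subtype.ext h2⟩
  rw [← himg, Set.ncard_image_of_injOn hinj]

open SimpleGraph in
/-- If `G` is `P̂₄`-free and `u 0, u 1, u 2, u 3` are pairwise adjacent, with
`S` their vertex set and `Xᵢ = N(uᵢ) \ S`, then the number of triangles of `G`
meeting `S` equals `4 + ∑ i, e(G[Xᵢ])`. -/
theorem stmt_14 {V : Type} [Fintype V] (G : SimpleGraph V)
    (hfree : ¬ Contains hatP4 G)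
    (u : Fin 4 → V) (hadj : ∀ i j : Fin 4, i ≠ j → G.Adj (u i) (u j)) :
    {T : Finset V | T ∈ G.cliqueSet 3 ∧ ∃ i : Fin 4, u i ∈ T}.ncard =
      4 + ∑ i : Fin 4,
        ((G.induce (G.neighborSet (u i) \ Set.range u)).edgeSet).ncard := by
  classical
  have huinj : Function.Injective u := by
    intro i j h
    by_contra hne
    exact (hadj i j hne).ne h
  have hK : ∀ x, x ∉ Set.range u → ∀ j k : Fin 4, j ≠ k →
      G.Adj (u j) x → G.Adj (u k) x → False := fun x hx j k hjk h1 h2 =>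
    key_lemma G hfree u hadj x hx hjk h1 h2
  set A0 : Set (Finset V) := {T | T ∈ G.cliqueSet 3 ∧ ∀ v ∈ T, v ∈ Set.range u} with hA0
  set B : Fin 4 → Set (Finset V) :=
    fun i => {T | T ∈ G.cliqueSet 3 ∧ u i ∈ T ∧ ∃ v ∈ T, v ∉ Set.range u} with hB
  have hcover : {T : Finset V | T ∈ G.cliqueSet 3 ∧ ∃ i : Fin 4, u i ∈ T}
      = A0 ∪ (B 0 ∪ (B 1 ∪ (B 2 ∪ B 3))) := by
    ext T
    simp only [Set.mem_setOf_eq, Set.mem_union, hA0, hB]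
    constructor
    · rintro ⟨hT, i, hi⟩
      by_cases hall : ∀ v ∈ T, v ∈ Set.range u
      · exact Or.inl ⟨hT, hall⟩
      · push_neg at hall
        obtain ⟨v, hv, hvr⟩ := hall
        right
        fin_cases i
        · exact Or.inl ⟨hT, hi, v, hv, hvr⟩
        · exact Or.inr (Or.inl ⟨hT, hi, v, hv, hvr⟩)
        · exact Or.inr (Or.inr (Or.inl ⟨hT, hi, v, hv, hvr⟩))
        · exact Or.inr (Or.inr (Or.inr ⟨hT, hi, v, hv, hvr⟩))
    · rintro (⟨hT, hall⟩ | h)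
      · refine ⟨hT, ?_⟩
        obtain ⟨v, hv⟩ : T.Nonempty := by
          rw [mem_cliqueSet_iff] at hT
          rw [← Finset.card_pos, hT.card_eq]
          norm_num
        obtain ⟨i, hi⟩ := hall v hv
        exact ⟨i, hi ▸ hv⟩
      · rcases h with h | h | h | h <;> exact ⟨h.1, _, h.2.1⟩
  have hd0 : ∀ i : Fin 4, Disjoint A0 (B i) := by
    intro i
    rw [Set.disjoint_left]
    rintro T ⟨-, hall⟩ ⟨-, -, v, hv, hvr⟩
    exact hvr (hall v hv)
  have hdB : ∀ i j : Fin 4, i ≠ j → Disjoint (B i) (B j) := by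
    intro i j hij
    rw [Set.disjoint_left]
    rintro T ⟨hT, hi, v, hv, hvr⟩ ⟨-, hj, -⟩
    have hclique := (mem_cliqueSet_iff.1 hT).isClique
    have hvi : v ≠ u i := fun h => hvr (h ▸ ⟨i, rfl⟩)
    have hvj : v ≠ u j := fun h => hvr (h ▸ ⟨j, rfl⟩)
    exact hK v hvr i j hij (hclique hi hv (Ne.symm hvi)) (hclique hj hv (Ne.symm hvj))
  have D1 : Disjoint A0 (B 0 ∪ (B 1 ∪ (B 2 ∪ B 3))) := by
    simp only [Set.disjoint_union_right]
    exact ⟨hd0 0, hd0 1, hd0 2, hd0 3⟩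
  have D2 : Disjoint (B 0) (B 1 ∪ (B 2 ∪ B 3)) := by
    simp only [Set.disjoint_union_right]
    exact ⟨hdB 0 1 (by decide), hdB 0 2 (by decide), hdB 0 3 (by decide)⟩
  have D3 : Disjoint (B 1) (B 2 ∪ B 3) := by
    simp only [Set.disjoint_union_right]
    exact ⟨hdB 1 2 (by decide), hdB 1 3 (by decide)⟩
  have D4 : Disjoint (B 2) (B 3) := hdB 2 3 (by decide)
  have hc0 : A0.ncard = 4 := countA0 G u huinj hadj
  have hcB : ∀ i : Fin 4, (B i).ncard
      = ((G.induce (G.neighborSet (u i) \ Set.range u)).edgeSet).ncard :=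
    fun i => countB G u huinj hK i
  rw [hcover, Set.ncard_union_eq D1, Set.ncard_union_eq D2, Set.ncard_union_eq D3,
    Set.ncard_union_eq D4, hc0, hcB 0, hcB 1, hcB 2, hcB 3, Fin.sum_univ_four]
  ring
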